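/- Let α ∈ (0,1). If x ∈ [0,1/2) and x' ∈ [1/2,1) satisfy T_α(x) = T_α(x') (as real numbers in [0,1)), then the Euclidean distance between the points (cos 2πx, sin 2πx) and (cos 2πx', sin 2πx') on the unit circle is greater than 2/5, i.e. (cos 2πx − cos 2πx')² + (sin 2πx − sin 2πx')² > 4/25. -/

import Mathlib

open Set Real

/-- The intermittent circle map `T_α` on `[0,1)`. -/
noncomputable def Tmap (α x : ℝ) : ℝ :=
  if x < 1/2 then x * (1 + (2 * x) ^ α) else x - 2 ^ α * (1 - x) ^ (1 + α)

theorem branch_preimages_separated (α : ℝ) (hα0 : 0 < α) (hα1 : α < 1)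
    (x x' : ℝ) (hx : x ∈ Ico (0:ℝ) (1/2)) (hx' : x' ∈ Ico (1/2 : ℝ) 1)
    (hT : Tmap α x = Tmap α x') :
    (Real.cos (2 * π * x) - Real.cos (2 * π * x')) ^ 2 +
      (Real.sin (2 * π * x) - Real.sin (2 * π * x')) ^ 2 > 4 / 25 := by
  obtain ⟨hx0, hx2⟩ := hx
  obtain ⟨hx'1, hx'2⟩ := hx'
  have hne : ¬ x' < 1/2 := not_lt.2 hx'1
  rw [Tmap, Tmap, if_pos hx2, if_neg hne] at hT
  set t := x' - x with hts
  have h1x' : (0:ℝ) < 1 - x' := by linarith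
  -- key equation
  have hkey : t = x * (2*x) ^ α + 2 ^ α * (1 - x') ^ (1 + α) := by
    have : x * (1 + (2*x)^α) = x + x * (2*x)^α := by ring
    rw [this] at hT
    linarith
  -- bounds on the two rpow terms
  have hterm1_nonneg : 0 ≤ x * (2*x) ^ α :=
    mul_nonneg hx0 (Real.rpow_nonneg (by linarith) _)
  have hterm2_nonneg : 0 ≤ 2 ^ α * (1 - x') ^ (1 + α) :=
    mul_nonneg (Real.rpow_nonneg (by norm_num) _) (Real.rpow_nonneg (by linarith) _)
  have hterm1_le : x * (2*x) ^ α ≤ x := by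
    have h1 : (2*x) ^ α ≤ 1 := Real.rpow_le_one (by linarith) (by linarith) hα0.le
    nlinarith [Real.rpow_nonneg (show (0:ℝ) ≤ 2*x by linarith) α]
  have hterm2_le : 2 ^ α * (1 - x') ^ (1 + α) ≤ 1 - x' := by
    have hsplit : (1 - x') ^ (1 + α) = (1 - x') * (1 - x') ^ α := by
      rw [Real.rpow_add h1x', Real.rpow_one]
    have hmul : (2:ℝ) ^ α * (1 - x') ^ α = (2 * (1 - x')) ^ α :=
      (Real.mul_rpow (by norm_num) h1x'.le).symm
    have h1 : (2 * (1 - x')) ^ α ≤ 1 := Real.rpow_le_one (by linarith) (by linarith) hα0.le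
    calc 2 ^ α * (1 - x') ^ (1 + α) = (2 * (1-x'))^α * (1 - x') := by
          rw [hsplit, ← hmul]; ring
      _ ≤ 1 - x' := by nlinarith
  have ht_le : t ≤ 1/2 := by
    have : t ≤ x + (1 - x') := by rw [hkey]; linarith
    simp only [hts] at this ⊢; linarith
  have ht_ge : 1/15 ≤ t := by
    rcases le_or_gt x (13/30) with hc | hc
    · simp only [hts]; linarith
    · have h2x : (13:ℝ)/15 ≤ 2*x := by linarith
      have h3 : ((13:ℝ)/15) ^ α ≤ (2*x) ^ α :=
        Real.rpow_le_rpow (by norm_num) h2x hα0.le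
      have h4 : ((13:ℝ)/15) ^ (1:ℝ) ≤ ((13:ℝ)/15) ^ α :=
        Real.rpow_le_rpow_of_exponent_ge (by norm_num) (by norm_num) hα1.le
      rw [Real.rpow_one] at h4
      nlinarith [hkey]
  -- now the trig part
  have hπ : (3.141592:ℝ) < π := Real.pi_gt_d6
  have hπ' : π < 3.15 := by linarith [Real.pi_lt_d2]
  have hs15 : (1:ℝ)/5 < Real.sin (π/15) := by
    have h := Real.sin_gt_sub_cube (x := π/15) (by linarith)
    have hp1 : π/15 < 0.21 := by linarith
    have hp3 : (π/15)^3 < 0.21^3 := by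
      apply pow_lt_pow_left₀ hp1 (by positivity)
      norm_num
    nlinarith
  have hsin : (1:ℝ)/5 < Real.sin (π * t) := by
    have hmono : Real.sin (π/15) ≤ Real.sin (π * t) := by
      apply Real.sin_le_sin_of_le_of_le_pi_div_two
      · linarith
      · nlinarith
      · nlinarith
    linarith
  have hsin_sq : (1:ℝ)/25 < Real.sin (π * t) ^ 2 := by nlinarith
  -- squared distance identity
  have hcos : Real.cos (2*π*x - 2*π*x') = Real.cos (2*(π*t)) := by
    have : 2*π*x - 2*π*x' = -(2*(π*t)) := by simp only [hts]; ring
    rw [this, Real.cos_neg]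
  have hdouble : Real.cos (2*(π*t)) = 1 - 2 * Real.sin (π*t) ^ 2 := by
    rw [Real.cos_two_mul, Real.cos_sq']; ring
  have hd : (Real.cos (2*π*x) - Real.cos (2*π*x')) ^ 2 +
      (Real.sin (2*π*x) - Real.sin (2*π*x')) ^ 2
      = 2 - 2 * Real.cos (2*π*x - 2*π*x') := by
    rw [Real.cos_sub]
    linear_combination (Real.sin_sq_add_cos_sq (2*π*x)) + (Real.sin_sq_add_cos_sq (2*π*x'))
  rw [hd, hcos, hdouble]
  linarith
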